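/- arXiv:1501.02072 — 4 statements merged into one kernel-verified Lean document; each statement's English description precedes it below -/
import Mathlib

section
/- For every real quadratic irrational α₀ and every s > 0, the set {α ∈ PSL₂(ℤ)·α₀ : H(α) ≤ s} ∩ [0,1] is finite; that is, H is a proper height function on the orbit PSL₂(ℤ)·α₀ modulo translations by ℤ. -/
open scoped Classical

/-- `α` is a real quadratic irrational: an irrational real number which is the root of a
quadratic polynomial with rational coefficients. -/
def IsQuadIrr (α : ℝ) : Prop :=
  Irrational α ∧ ∃ a b c : ℚ, a ≠ 0 ∧ (a : ℝ) * α ^ 2 + (b : ℝ) * α + (c : ℝ) = 0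

/-- `σ` is the Galois conjugate of the real quadratic irrational `α`: the other root of
its minimal (quadratic) polynomial over `ℚ`. -/
def IsGalConj (α σ : ℝ) : Prop :=
  Irrational α ∧ σ ≠ α ∧
    ∃ a b c : ℚ, a ≠ 0 ∧ (a : ℝ) * α ^ 2 + (b : ℝ) * α + (c : ℝ) = 0 ∧
      (a : ℝ) * σ ^ 2 + (b : ℝ) * σ + (c : ℝ) = 0

/-- The Galois conjugate `α^σ` of a real quadratic irrational `α` (junk value `0` if `α`
is not a real quadratic irrational). -/
noncomputable def galConj (α : ℝ) : ℝ :=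
  if h : ∃ σ, IsGalConj α σ then h.choose else 0

/-- The height `H(α) = 2/|α − α^σ|` of a real quadratic irrational `α`. -/
noncomputable def qiHeight (α : ℝ) : ℝ := 2 / |α - galConj α|

/-- The action of `SL₂(ℤ)` (inducing the action of `PSL₂(ℤ)`) on real numbers by
homographies: the matrix `(a b; c d)` sends `x` to `(a·x+b)/(c·x+d)`. -/
noncomputable def mob (A : Matrix.SpecialLinearGroup (Fin 2) ℤ) (x : ℝ) : ℝ :=
  ((A.1 0 0 : ℝ) * x + (A.1 0 1 : ℝ)) / ((A.1 1 0 : ℝ) * x + (A.1 1 1 : ℝ))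

/-- The orbit `PSL₂(ℤ)·α₀` of a real number under the homography action. -/
def mobOrbit (α₀ : ℝ) : Set ℝ := {α | ∃ A, mob A α₀ = α}

/-- The Golden Ratio `φ = (1+√5)/2`. -/
noncomputable def goldenRat : ℝ := (1 + Real.sqrt 5) / 2

/-- The approximation constant `c(y)` of `y` by the elements of `Z` (with the height
function `H = qiHeight`): the liminf of `H(α)·|y − α|` as `α` ranges over `Z` along the
Fréchet filter, i.e. the sup over finite subsets `F` of the inf over `α ∈ Z ∖ F` of
`H(α)·|y − α|`. -/
noncomputable def approxConst (Z : Set ℝ) (y : ℝ) : ℝ :=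
  ⨆ F : Finset ℝ, ⨅ α : {α : ℝ // α ∈ Z ∧ α ∉ F}, qiHeight α.1 * |y - α.1|

/-- The Lagrange spectrum for the approximation of the elements of
`ℝ ∖ (ℚ ∪ Z)` by the elements of `Z`. -/
noncomputable def lagrangeSpectrum (Z : Set ℝ) : Set ℝ :=
  approxConst Z '' {y : ℝ | Irrational y ∧ y ∉ Z}

lemma irr_lin {α : ℝ} (h : Irrational α) {p q : ℚ} (hpq : (p:ℝ)*α + q = 0) :
    p = 0 ∧ q = 0 := by
  by_cases hp : p = 0
  · subst hp
    simp at hpq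
    exact ⟨rfl, by exact_mod_cast hpq⟩
  · exfalso
    apply h
    refine ⟨-q/p, ?_⟩
    push_cast
    have : (p:ℝ) ≠ 0 := by exact_mod_cast hp
    field_simp
    linarith [hpq]

lemma sq_eq_D {α : ℝ} {a b c : ℤ} (hroot : (a:ℝ)*α^2 + (b:ℝ)*α + (c:ℝ) = 0) :
    ((2*(a:ℝ))*α + b)^2 = ((b^2 - 4*a*c : ℤ) : ℝ) := by
  push_cast
  linear_combination (4*(a:ℝ)) * hroot

lemma lin_ne {α : ℝ} (hirr : Irrational α) {a b c : ℤ} (ha : a ≠ 0)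
    (hroot : (a:ℝ)*α^2 + (b:ℝ)*α + (c:ℝ) = 0) : (2*(a:ℝ))*α + b ≠ 0 := by
  intro h0
  have h1 : ((2*a : ℚ):ℝ)*α + ((b:ℚ):ℝ) = 0 := by push_cast; push_cast at h0; linarith
  have h2 := (irr_lin hirr h1).1
  have : (2*a : ℚ) ≠ 0 := by exact_mod_cast mul_ne_zero two_ne_zero ha
  exact this h2

lemma D_pos {α : ℝ} (hirr : Irrational α) {a b c : ℤ} (ha : a ≠ 0)
    (hroot : (a:ℝ)*α^2 + (b:ℝ)*α + (c:ℝ) = 0) : (0:ℤ) < b^2 - 4*a*c := by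
  have h1 := sq_eq_D hroot
  have h2 : (0:ℝ) < ((b^2 - 4*a*c : ℤ) : ℝ) := by
    rw [← h1]
    exact pow_pos (abs_pos.mpr (lin_ne hirr ha hroot)) 2 |>.trans_le (by rw [sq_abs])
  exact_mod_cast h2

lemma abs_lin_eq {α : ℝ} {a b c : ℤ}
    (hroot : (a:ℝ)*α^2 + (b:ℝ)*α + (c:ℝ) = 0) :
    |(2*(a:ℝ))*α + b| = Real.sqrt ((b^2 - 4*a*c : ℤ) : ℝ) := by
  rw [← Real.sqrt_sq_eq_abs, sq_eq_D hroot]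

lemma conj_unique {α : ℝ} (hirr : Irrational α) {a b c : ℤ} (ha : a ≠ 0)
    (hroot : (a:ℝ)*α^2 + (b:ℝ)*α + (c:ℝ) = 0) {σ : ℝ} (hσ : IsGalConj α σ) :
    σ = -(b:ℝ)/a - α := by
  obtain ⟨-, hne, p, q, r, hp, h1, h2⟩ := hσ
  -- cross: a*q = p*b  (as rationals, with casts)
  have hcross : (a:ℚ)*q - p*b = 0 ∧ (a:ℚ)*r - p*c = 0 := by
    have hlin : (((a:ℚ)*q - p*b : ℚ):ℝ)*α + (((a:ℚ)*r - p*c : ℚ):ℝ) = 0 := by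
      push_cast
      linear_combination (a:ℝ)*h1 - ((p:ℝ)) * hroot
    exact irr_lin hirr hlin
  have hsum : (p:ℝ)*(σ + α) + q = 0 := by
    have hd : (σ - α) * ((p:ℝ)*(σ+α) + q) = 0 := by linear_combination h2 - h1
    rcases mul_eq_zero.mp hd with h | h
    · exact absurd (sub_eq_zero.mp h) hne
    · exact h
  have hpa : (p:ℝ) ≠ 0 := by exact_mod_cast hp
  have haa : (a:ℝ) ≠ 0 := by exact_mod_cast ha
  have hqb : (a:ℝ)*q = p*b := by exact_mod_cast sub_eq_zero.mp (by exact_mod_cast hcross.1)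
  have h3 : (p:ℝ) * ((a:ℝ)*(σ+α)) = (p:ℝ) * (-(b:ℝ)) := by
    linear_combination (a:ℝ)*hsum - hqb
  have h4 := mul_left_cancel₀ hpa h3
  field_simp
  linarith [h4]

lemma conj_exists {α : ℝ} (hirr : Irrational α) {a b c : ℤ} (ha : a ≠ 0)
    (hroot : (a:ℝ)*α^2 + (b:ℝ)*α + (c:ℝ) = 0) :
    IsGalConj α (-(b:ℝ)/a - α) := by
  have haa : (a:ℝ) ≠ 0 := by exact_mod_cast ha
  refine ⟨hirr, ?_, (a:ℚ), (b:ℚ), (c:ℚ), by exact_mod_cast ha, by push_cast; exact hroot, ?_⟩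
  · intro h
    apply lin_ne hirr ha hroot
    have : -(b:ℝ)/a = 2*α := by linarith
    field_simp at this
    linarith
  · push_cast
    field_simp
    linear_combination (a:ℝ) * hroot

lemma galConj_eq {α : ℝ} (hirr : Irrational α) {a b c : ℤ} (ha : a ≠ 0)
    (hroot : (a:ℝ)*α^2 + (b:ℝ)*α + (c:ℝ) = 0) :
    galConj α = -(b:ℝ)/a - α := by
  have hex : ∃ σ, IsGalConj α σ := ⟨_, conj_exists hirr ha hroot⟩
  rw [galConj, dif_pos hex]
  exact conj_unique hirr ha hroot hex.choose_spec

lemma qiHeight_eq {α : ℝ} (hirr : Irrational α) {a b c : ℤ} (ha : a ≠ 0)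
    (hroot : (a:ℝ)*α^2 + (b:ℝ)*α + (c:ℝ) = 0) :
    qiHeight α = 2 * |(a:ℝ)| / Real.sqrt ((b^2 - 4*a*c : ℤ) : ℝ) := by
  have haa : (a:ℝ) ≠ 0 := by exact_mod_cast ha
  have h1 : α - galConj α = ((2*(a:ℝ))*α + b) / a := by
    rw [galConj_eq hirr ha hroot]; field_simp; ring
  rw [qiHeight, h1, abs_div, abs_lin_eq hroot, div_div_eq_mul_div]

lemma irr_lin' {α : ℝ} (h : Irrational α) {p q : ℤ} (hpq : (p:ℝ)*α + q = 0) :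
    p = 0 ∧ q = 0 := by
  have h2 : ((p:ℚ):ℝ)*α + ((q:ℚ):ℝ) = 0 := by push_cast; push_cast at hpq; linarith
  have := irr_lin h h2
  exact_mod_cast this


lemma orbit_quad {α₀ : ℝ} (hirr₀ : Irrational α₀) {a b c : ℤ} (ha : a ≠ 0)
    (hroot₀ : (a:ℝ)*α₀^2 + (b:ℝ)*α₀ + (c:ℝ) = 0)
    (hD : (0:ℤ) < b^2 - 4*a*c)
    (A : Matrix.SpecialLinearGroup (Fin 2) ℤ) :
    ∃ a' b' c' : ℤ, a' ≠ 0 ∧ Irrational (mob A α₀) ∧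
      (a':ℝ)*(mob A α₀)^2 + (b':ℝ)*(mob A α₀) + (c':ℝ) = 0 ∧
      b'^2 - 4*a'*c' = b^2 - 4*a*c := by
  set p := A.1 0 0 with hp
  set q := A.1 0 1 with hq
  set r := A.1 1 0 with hr
  set s := A.1 1 1 with hs
  have hdet : p * s - q * r = 1 := by
    have := A.2
    rw [Matrix.det_fin_two] at this
    exact this
  have hden : (r:ℝ)*α₀ + s ≠ 0 := by
    intro h0
    obtain ⟨h1, h2⟩ := irr_lin' hirr₀ h0
    rw [h1, h2] at hdet
    simp at hdet
  have hmob : mob A α₀ = ((p:ℝ)*α₀ + q) / ((r:ℝ)*α₀ + s) := rfl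
  have hirr : Irrational (mob A α₀) := by
    intro ⟨t, ht⟩
    have h1 : (p:ℝ)*α₀ + q = (t:ℝ)*((r:ℝ)*α₀ + s) := by
      rw [hmob] at ht
      field_simp at ht
      rw [ht, mul_comm α₀ (r:ℝ), div_mul_cancel₀ _ hden]
    have h2 : (((p:ℚ) - t*r : ℚ):ℝ)*α₀ + (((q:ℚ) - t*s : ℚ):ℝ) = 0 := by
      push_cast
      linarith [h1]
    obtain ⟨e1, e2⟩ := irr_lin hirr₀ h2
    have e1' : (p:ℚ) = t*r := by linarith [e1]
    have e2' : (q:ℚ) = t*s := by linarith [e2]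
    have : ((p*s - q*r : ℤ) : ℚ) = 0 := by push_cast; rw [e1', e2']; ring
    rw [hdet] at this
    norm_num at this
  have hquad : ((a*s^2 - b*r*s + c*r^2 : ℤ):ℝ)*(mob A α₀)^2
      + ((-2*a*q*s + b*(p*s + q*r) - 2*c*p*r : ℤ):ℝ)*(mob A α₀)
      + ((a*q^2 - b*p*q + c*p^2 : ℤ):ℝ) = 0 := by
    have hq2 : (mob A α₀) * ((r:ℝ)*α₀ + s) = (p:ℝ)*α₀ + q := by
      rw [hmob]; field_simp; rw [mul_comm α₀ (r:ℝ)]; exact mul_div_cancel_right₀ _ hden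
    have key : (((a*s^2 - b*r*s + c*r^2 : ℤ):ℝ)*(mob A α₀)^2
        + ((-2*a*q*s + b*(p*s + q*r) - 2*c*p*r : ℤ):ℝ)*(mob A α₀)
        + ((a*q^2 - b*p*q + c*p^2 : ℤ):ℝ)) * ((r:ℝ)*α₀+s)^2 = 0 := by
      push_cast
      linear_combination (((a:ℝ)*s^2 - b*r*s + c*r^2)*((mob A α₀)*((r:ℝ)*α₀+s)
          + ((p:ℝ)*α₀+q)) + ((-2:ℝ)*a*q*s + b*((p:ℝ)*s+q*r) - 2*c*p*r)*((r:ℝ)*α₀+s)) * hq2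
        + (((p:ℝ)*s - q*r)^2) * hroot₀
    rcases mul_eq_zero.mp key with h | h
    · exact h
    · exact absurd h (pow_ne_zero 2 hden)
  have hdisc : (-2*a*q*s + b*(p*s + q*r) - 2*c*p*r)^2
      - 4*(a*s^2 - b*r*s + c*r^2)*(a*q^2 - b*p*q + c*p^2) = b^2 - 4*a*c := by
    linear_combination ((p*s - q*r + 1)*(b^2 - 4*a*c)) * hdet
  refine ⟨a*s^2 - b*r*s + c*r^2, -2*a*q*s + b*(p*s + q*r) - 2*c*p*r,
    a*q^2 - b*p*q + c*p^2, ?_, hirr, hquad, hdisc⟩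
  intro h0
  rw [h0] at hquad hdisc
  have h1 : ((-2*a*q*s + b*(p*s + q*r) - 2*c*p*r : ℤ):ℝ)*(mob A α₀)
      + ((a*q^2 - b*p*q + c*p^2 : ℤ):ℝ) = 0 := by
    push_cast at hquad ⊢
    linarith [hquad]
  obtain ⟨e1, e2⟩ := irr_lin' hirr h1
  rw [e1, e2] at hdisc
  simp at hdisc
  omega


/-- Parkkonen-Paulin: `H(α) = 2/|α − α^σ|` is a proper height function on the orbit
`PSL₂(ℤ)·α₀` of a real quadratic irrational `α₀` modulo translations by `ℤ`: for every
`s > 0`, the set `{α ∈ PSL₂(ℤ)·α₀ : H(α) ≤ s} ∩ [0,1]` is finite. -/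
theorem qiHeight_proper (α₀ : ℝ) (hα₀ : IsQuadIrr α₀) (s : ℝ) (hs : 0 < s) :
    {α : ℝ | α ∈ mobOrbit α₀ ∧ qiHeight α ≤ s ∧ α ∈ Set.Icc (0 : ℝ) 1}.Finite := by
  obtain ⟨hirr₀, aq, bq, cq, haq, hrootq⟩ := hα₀
  -- scale to integer coefficients
  set a : ℤ := aq.num * bq.den * cq.den with ha_def
  set b : ℤ := bq.num * aq.den * cq.den with hb_def
  set c : ℤ := cq.num * aq.den * bq.den with hc_def
  have hnum : ∀ x : ℚ, ((x.num : ℝ)) = (x : ℝ) * (x.den : ℝ) := by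
    intro x
    rw [Rat.cast_def]
    have : (x.den : ℝ) ≠ 0 := Nat.cast_ne_zero.mpr x.den_nz
    field_simp
  have ha : a ≠ 0 := by
    refine mul_ne_zero (mul_ne_zero ?_ ?_) ?_ <;>
      simp [Rat.num_ne_zero, haq, Int.natCast_ne_zero, Rat.den_nz]
  have hroot₀ : (a:ℝ)*α₀^2 + (b:ℝ)*α₀ + (c:ℝ) = 0 := by
    rw [ha_def, hb_def, hc_def]
    push_cast
    rw [hnum aq, hnum bq, hnum cq]
    linear_combination ((aq.den : ℝ) * (bq.den : ℝ) * (cq.den : ℝ)) * hrootq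
  have hD : (0:ℤ) < b^2 - 4*a*c := D_pos hirr₀ ha hroot₀
  set sqD : ℝ := Real.sqrt ((b^2 - 4*a*c : ℤ) : ℝ) with hsqD_def
  have hsqD : 0 < sqD := Real.sqrt_pos.mpr (by exact_mod_cast hD)
  set m : ℤ := ⌈s * sqD / 2⌉ with hm_def
  set n : ℤ := ⌈sqD + s * sqD⌉ with hn_def
  apply Set.Finite.subset
    (Set.Finite.biUnion
      ((Finset.Icc (-m) m ×ˢ Finset.Icc (-n) n : Finset (ℤ × ℤ)).finite_toSet)
      (fun p _ => (Set.finite_singleton ((-(p.2:ℝ) - sqD)/(2*p.1))).insert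
        ((-(p.2:ℝ) + sqD)/(2*p.1))))
  rintro α ⟨⟨A, hA⟩, hH, h0, h1⟩
  obtain ⟨a', b', c', ha', hirr, hquad, hdisc⟩ := orbit_quad hirr₀ ha hroot₀ hD A
  rw [hA] at hirr hquad
  -- height formula
  have hht : qiHeight α = 2 * |(a':ℝ)| / sqD := by
    rw [qiHeight_eq hirr ha' hquad, hsqD_def, hdisc]
  have habs : |(2*(a':ℝ))*α + b'| = sqD := by
    rw [abs_lin_eq hquad, hsqD_def, hdisc]
  have haa' : (0:ℝ) < |(a':ℝ)| := abs_pos.mpr (by exact_mod_cast ha')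
  have hba : |(a':ℝ)| ≤ s * sqD / 2 := by
    rw [hht, div_le_iff₀ hsqD] at hH
    linarith
  have hαabs : |α| ≤ 1 := abs_le.mpr ⟨by linarith, h1⟩
  have hbb : |(b':ℝ)| ≤ sqD + s * sqD := by
    have h2 : |(b':ℝ)| ≤ |(2*(a':ℝ))*α + b'| + |(2*(a':ℝ))*α| := by
      have he : (b':ℝ) = ((2*(a':ℝ))*α + b') + (-((2*(a':ℝ))*α)) := by ring
      calc |(b':ℝ)| = |((2*(a':ℝ))*α + b') + (-((2*(a':ℝ))*α))| := by rw [← he]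
        _ ≤ |(2*(a':ℝ))*α + b'| + |(-((2*(a':ℝ))*α))| := abs_add_le _ _
        _ = |(2*(a':ℝ))*α + b'| + |(2*(a':ℝ))*α| := by rw [abs_neg]
    have h3 : |(2*(a':ℝ))*α| ≤ 2 * |(a':ℝ)| := by
      rw [abs_mul]
      calc |2*(a':ℝ)| * |α| ≤ |2*(a':ℝ)| * 1 := by
            exact mul_le_mul_of_nonneg_left hαabs (abs_nonneg _)
        _ = 2 * |(a':ℝ)| := by rw [mul_one, abs_mul]; simp
    rw [habs] at h2
    linarith
  -- membership in the finite union
  have hmem : (a', b') ∈ (Finset.Icc (-m) m ×ˢ Finset.Icc (-n) n : Finset (ℤ × ℤ)) := by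
    rw [Finset.mem_product, Finset.mem_Icc, Finset.mem_Icc]
    have hm1 : |(a':ℝ)| ≤ (m:ℝ) := hba.trans (Int.le_ceil _)
    have hn1 : |(b':ℝ)| ≤ (n:ℝ) := hbb.trans (Int.le_ceil _)
    rw [abs_le] at hm1 hn1
    obtain ⟨hm1a, hm1b⟩ := hm1
    obtain ⟨hn1a, hn1b⟩ := hn1
    exact ⟨⟨by exact_mod_cast hm1a, by exact_mod_cast hm1b⟩,
      by exact_mod_cast hn1a, by exact_mod_cast hn1b⟩
  refine Set.mem_biUnion hmem ?_
  have h2a : (2*(a':ℝ)) ≠ 0 := by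
    intro h; exact haa'.ne' (by rw [abs_eq_zero]; linarith [abs_nonneg (a':ℝ)] )
  rcases (abs_eq hsqD.le).mp habs with h | h
  · left
    rw [eq_div_iff (by simpa [mul_comm] using h2a : (2*(a':ℝ)) ≠ 0)]
    push_cast
    linarith [h]
  · right
    rw [Set.mem_singleton_iff, eq_div_iff (by simpa [mul_comm] using h2a : (2*(a':ℝ)) ≠ 0)]
    push_cast
    linarith [h]
end

section
/- A real number α is a quadratic irrational if and only if there exists a matrix A ∈ SL₂(ℤ) with |tr A| > 2 whose associated homography fixes α. Moreover, for any such A, the other fixed point in ℝ of the homography of A is the Galois conjugate α^σ of α. -/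
open scoped Classical

/-- The homography associated to the matrix `A = (a b; c d)` fixes the real number `x`:
in projective terms, `a·x + b = x·(c·x + d)`. -/
def MobFixes (A : Matrix.SpecialLinearGroup (Fin 2) ℤ) (x : ℝ) : Prop :=
  (A.1 0 0 : ℝ) * x + (A.1 0 1 : ℝ) = x * ((A.1 1 0 : ℝ) * x + (A.1 1 1 : ℝ))

lemma rat_sq_int {q : ℚ} {n : ℤ} (h : q ^ 2 = (n : ℚ)) : ∃ m : ℤ, (m : ℚ) = q := by
  have hden : q.den ^ 2 = 1 := by
    have h1 : (q ^ 2).den = 1 := by rw [h]; exact Rat.den_intCast n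
    simpa [Rat.den_pow] using h1
  have : q.den = 1 := by nlinarith [q.den.pos_of_ne_zero (Rat.den_nz q)]
  exact ⟨q.num, (Rat.den_eq_one_iff q).1 this⟩

lemma irrational_of_int_quad {A B C : ℤ}
    {x : ℝ} (hx : (A : ℝ) * x ^ 2 + (B : ℝ) * x + (C : ℝ) = 0)
    (hns : ¬ IsSquare (B ^ 2 - 4 * A * C)) : Irrational x := by
  rintro ⟨q, rfl⟩
  have hq : (A : ℚ) * q ^ 2 + B * q + C = 0 := by
    have : (((A : ℚ) * q ^ 2 + B * q + C : ℚ) : ℝ) = 0 := by push_cast; linarith [hx]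
    exact_mod_cast this
  have hsq : (2 * (A : ℚ) * q + B) ^ 2 = ((B ^ 2 - 4 * A * C : ℤ) : ℚ) := by
    push_cast
    linear_combination (4 * (A : ℚ)) * hq
  obtain ⟨m, hm⟩ := rat_sq_int hsq
  apply hns
  refine ⟨m, ?_⟩
  have : ((B ^ 2 - 4 * A * C : ℤ) : ℚ) = ((m * m : ℤ) : ℚ) := by
    rw [← hsq, ← hm]; push_cast; ring
  exact Int.cast_injective this

lemma disc_not_square {t : ℤ} (ht : 2 < |t|) : ¬ IsSquare (t ^ 2 - 4) := by
  rintro ⟨k, hk⟩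
  have h3 : 3 ≤ |t| := ht
  have hk' : |k| * |k| = t ^ 2 - 4 := by
    rw [← abs_mul, ← hk]
    exact abs_of_nonneg (by nlinarith [sq_abs t])
  have hba : |k| < |t| := by nlinarith [sq_abs t, abs_nonneg k, abs_nonneg t]
  have hlb : |t| - 1 < |k| := by nlinarith [sq_abs t, abs_nonneg k]
  omega

lemma galconj_of_quad {P Q R S : ℤ} (hR : R ≠ 0) {α x : ℝ} (hirr : Irrational α)
    (hne : x ≠ α)
    (h1 : (R : ℝ) * α ^ 2 + ((S : ℝ) - P) * α - Q = 0)
    (h2 : (R : ℝ) * x ^ 2 + ((S : ℝ) - P) * x - Q = 0) : IsGalConj α x := by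
  refine ⟨hirr, hne, (R : ℚ), ((S : ℚ) - P), (-(Q : ℚ)), by exact_mod_cast hR, ?_, ?_⟩ <;>
    push_cast <;> linarith

/-- A real number `α` is a quadratic irrational if and only if there is a matrix
`A ∈ SL₂(ℤ)` with `|tr A| > 2` whose homography fixes `α`; moreover, for any such `A`,
the other real fixed point of the homography of `A` is the Galois conjugate `α^σ`
of `α`. -/
theorem isQuadIrr_iff_fixed_by_hyperbolic (α : ℝ) :
    (IsQuadIrr α ↔
      ∃ A : Matrix.SpecialLinearGroup (Fin 2) ℤ, 2 < |A.1 0 0 + A.1 1 1| ∧ MobFixes A α) ∧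
    (∀ A : Matrix.SpecialLinearGroup (Fin 2) ℤ, 2 < |A.1 0 0 + A.1 1 1| → MobFixes A α →
      (∃ x : ℝ, x ≠ α ∧ MobFixes A x ∧ IsGalConj α x) ∧
      ∀ x : ℝ, MobFixes A x → x ≠ α → IsGalConj α x) := by
  -- general facts about a hyperbolic matrix fixing α
  have main : ∀ A : Matrix.SpecialLinearGroup (Fin 2) ℤ, 2 < |A.1 0 0 + A.1 1 1| →
      MobFixes A α →
      A.1 1 0 ≠ 0 ∧ Irrational α ∧
        ((A.1 1 0 : ℝ) * α ^ 2 + ((A.1 1 1 : ℝ) - A.1 0 0) * α - A.1 0 1 = 0) := by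
    intro A ht hfix
    set P := A.1 0 0 with hP
    set Q := A.1 0 1 with hQ
    set R := A.1 1 0 with hRdef
    set S := A.1 1 1 with hS
    have hdet : P * S - Q * R = 1 := by
      have := A.2
      rwa [Matrix.det_fin_two] at this
    unfold MobFixes at hfix
    have hquad : (R : ℝ) * α ^ 2 + ((S : ℝ) - P) * α - Q = 0 := by
      linear_combination -hfix
    have hR : R ≠ 0 := by
      intro h0
      rw [h0, mul_zero, sub_zero] at hdet
      rcases Int.mul_eq_one_iff_eq_one_or_neg_one.1 hdet with ⟨h1, h2⟩ | ⟨h1, h2⟩ <;>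
        rw [h1, h2] at ht <;> norm_num at ht
    have hquad' : (R : ℝ) * α ^ 2 + ((S - P : ℤ) : ℝ) * α + ((-Q : ℤ) : ℝ) = 0 := by
      push_cast; linarith
    have hns : ¬ IsSquare ((S - P) ^ 2 - 4 * R * (-Q)) := by
      have hdisc : (S - P) ^ 2 - 4 * R * (-Q) = (P + S) ^ 2 - 4 := by
        linear_combination (-4) * hdet
      rw [hdisc]
      exact disc_not_square ht
    exact ⟨hR, irrational_of_int_quad hquad' hns, hquad⟩
  constructor
  · constructor
    · rintro ⟨hirr, a, b, c, ha, heq⟩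
      -- clear denominators
      set ia : ℤ := a.num * b.den * c.den with hia_def
      set ib : ℤ := a.den * b.num * c.den with hib_def
      set ic : ℤ := a.den * b.den * c.num with hic_def
      have hnum : ∀ q : ℚ, ((q.num : ℤ) : ℝ) = (q : ℝ) * q.den := by
        intro q
        have h1 : ((q.num : ℚ) : ℝ) = ((q * q.den : ℚ) : ℝ) := by
          norm_cast
          field_simp
          exact (Rat.mul_den_eq_num q).symm
        push_cast at h1
        exact_mod_cast h1
      have hroot : (ia : ℝ) * α ^ 2 + (ib : ℝ) * α + (ic : ℝ) = 0 := by
        rw [hia_def, hib_def, hic_def]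
        push_cast
        linear_combination ((a.den : ℝ) * b.den * c.den) * heq +
          ((b.den : ℝ) * c.den * α ^ 2) * hnum a + ((a.den : ℝ) * c.den * α) * hnum b +
          ((a.den : ℝ) * b.den) * hnum c
      have hia : ia ≠ 0 := by
        rw [hia_def]
        refine mul_ne_zero (mul_ne_zero ?_ ?_) ?_ <;>
          simp [Rat.num_ne_zero, ha, Rat.den_nz]
      set D : ℤ := ib ^ 2 - 4 * ia * ic with hD_def
      have hsq : (2 * (ia : ℝ) * α + ib) ^ 2 = (D : ℝ) := by
        rw [hD_def]; push_cast; linear_combination (4 * (ia : ℝ)) * hroot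
      have hkey : ∀ r : ℚ, 2 * (ia : ℝ) * α + ib ≠ (r : ℝ) := by
        intro r hr
        apply hirr
        refine ⟨(r - (ib : ℚ)) / (2 * (ia : ℚ)), ?_⟩
        have hia' : ((ia : ℚ) : ℝ) ≠ 0 := by exact_mod_cast hia
        push_cast
        push_cast at hia'
        field_simp
        linarith
      have hD0 : (0 : ℝ) ≤ (D : ℝ) := by rw [← hsq]; positivity
      have hDne : D ≠ 0 := by
        intro h0
        have : (2 * (ia : ℝ) * α + ib) ^ 2 = 0 := by rw [hsq, h0]; norm_num
        have h1 : 2 * (ia : ℝ) * α + ib = 0 := by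
          exact pow_eq_zero_iff (n := 2) (by norm_num) |>.1 this
        exact hkey 0 (by rw [h1]; norm_num)
      have hDpos : 0 < D := lt_of_le_of_ne (by exact_mod_cast hD0) (Ne.symm hDne)
      have hDns : ¬ IsSquare D := by
        rintro ⟨m, hm⟩
        have hm' : (2 * (ia : ℝ) * α + ib) ^ 2 = (m : ℝ) ^ 2 := by
          rw [hsq, hm]; push_cast; ring
        rcases sq_eq_sq_iff_eq_or_eq_neg.1 hm' with h | h
        · exact hkey (m : ℚ) (by push_cast; push_cast at h; linarith)
        · exact hkey (-(m : ℚ)) (by push_cast; push_cast at h; linarith)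
      obtain ⟨x, y, hpell, hy⟩ := Pell.exists_of_not_isSquare hDpos hDns
      rw [hD_def] at hpell
      refine ⟨⟨!![x - ib * y, -(2 * ic * y); 2 * ia * y, x + ib * y], ?_⟩, ?_, ?_⟩
      · rw [Matrix.det_fin_two_of]
        linear_combination hpell
      · have hentries : (!![x - ib * y, -(2 * ic * y); 2 * ia * y, x + ib * y] : Matrix (Fin 2) (Fin 2) ℤ) 0 0
            + (!![x - ib * y, -(2 * ic * y); 2 * ia * y, x + ib * y] : Matrix (Fin 2) (Fin 2) ℤ) 1 1 = 2 * x := by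
          simp [Matrix.cons_val_zero, Matrix.cons_val_one, Matrix.head_cons]
          ring
        rw [hentries]
        have hy1 : 1 ≤ |y| := Int.one_le_abs hy
        have hy2 : 1 ≤ y ^ 2 := by nlinarith [sq_abs y]
        have hx2 : 2 ≤ x ^ 2 := by nlinarith
        have hxa : 2 ≤ |x| := by nlinarith [sq_abs x, abs_nonneg x]
        rw [abs_mul]
        have : |(2 : ℤ)| = 2 := by norm_num
        rw [this]
        omega
      · unfold MobFixes
        simp only [Matrix.cons_val', Matrix.cons_val_zero, Matrix.cons_val_one,
          Matrix.head_cons, Matrix.head_fin_const, Matrix.empty_val',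
          Matrix.cons_val_fin_one, Matrix.of_apply]
        push_cast
        linear_combination (-(2 : ℝ) * y) * hroot
    · rintro ⟨A, ht, hfix⟩
      obtain ⟨hR, hirr, hquad⟩ := main A ht hfix
      refine ⟨hirr, (A.1 1 0 : ℚ), ((A.1 1 1 : ℚ) - A.1 0 0), (-(A.1 0 1 : ℚ)),
        by exact_mod_cast hR, ?_⟩
      push_cast
      linarith
  · intro A ht hfix
    obtain ⟨hR, hirr, hquad⟩ := main A ht hfix
    have hRr : ((A.1 1 0 : ℤ) : ℝ) ≠ 0 := by exact_mod_cast hR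
    have key : ∀ x : ℝ, MobFixes A x ↔
        (A.1 1 0 : ℝ) * x ^ 2 + ((A.1 1 1 : ℝ) - A.1 0 0) * x - A.1 0 1 = 0 := by
      intro x
      unfold MobFixes
      constructor <;> intro h <;> linear_combination -h
    constructor
    · set β : ℝ := -(((A.1 1 1 : ℝ) - A.1 0 0)) / (A.1 1 0 : ℝ) - α with hβ
      have hβquad : (A.1 1 0 : ℝ) * β ^ 2 + ((A.1 1 1 : ℝ) - A.1 0 0) * β - A.1 0 1 = 0 := by
        have hexp : (A.1 1 0 : ℝ) * β ^ 2 + ((A.1 1 1 : ℝ) - A.1 0 0) * β - A.1 0 1 =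
            (A.1 1 0 : ℝ) * α ^ 2 + ((A.1 1 1 : ℝ) - A.1 0 0) * α - A.1 0 1 := by
          rw [hβ]
          field_simp
          ring
        rw [hexp]
        exact hquad
      have hne : β ≠ α := by
        intro h
        apply hirr
        refine ⟨-((A.1 1 1 : ℚ) - A.1 0 0) / (2 * (A.1 1 0 : ℚ)), ?_⟩
        rw [hβ] at h
        have h2 : -(((A.1 1 1 : ℝ) - A.1 0 0)) = 2 * α * (A.1 1 0 : ℝ) := by
          field_simp at h
          linarith
        push_cast
        field_simp
        linarith
      exact ⟨β, hne, (key β).2 hβquad, galconj_of_quad hR hirr hne hquad hβquad⟩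
    · intro x hfx hne
      exact galconj_of_quad hR hirr hne hquad ((key x).1 hfx)
end

section
/- Let α and α' be distinct real numbers with |α − α'| < 2. Then the infimum of the hyperbolic distances d_ℍ(z, w), over all z in the horoball {z ∈ ℍ : Im z ≥ 1} and all w on the geodesic line with endpoints α and α' (the Euclidean semicircle {w ∈ ℍ : |w − (α+α')/2| = |α−α'|/2}), is equal to ln(2/|α − α'|). In particular, the common perpendicular between this horoball and this geodesic has length ln H where H = 2/|α − α'|. -/
/-- Let `α ≠ α'` be real numbers with `|α − α'| < 2`. The infimum of the hyperbolic
distances `d_ℍ(z,w)`, over `z` in the horoball `{Im z ≥ 1}` and `w` on the geodesic line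
with endpoints `α` and `α'` (the Euclidean semicircle of center `(α+α')/2` and radius
`|α−α'|/2`), equals `ln(2/|α−α'|)`; i.e. the common perpendicular between this horoball
and this geodesic has length `ln H` with `H = 2/|α − α'|`. -/
theorem dist_horoball_to_geodesic (α α' : ℝ) (hne : α ≠ α') (hlt : |α - α'| < 2) :
    sInf {d : ℝ | ∃ z w : UpperHalfPlane, 1 ≤ z.im ∧
        ‖(w : ℂ) - (((α + α') / 2 : ℝ) : ℂ)‖ = |α - α'| / 2 ∧
        d = dist z w} =
      Real.log (2 / |α - α'|) := by
  set c : ℝ := (α + α') / 2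
  set r : ℝ := |α - α'| / 2 with hr
  have hr0 : 0 < r := by
    have : 0 < |α - α'| := abs_pos.mpr (sub_ne_zero.mpr hne)
    positivity
  have hr1 : r < 1 := by
    rw [hr]; linarith
  have hL : Real.log (2 / |α - α'|) = -Real.log r := by
    have hab : |α - α'| ≠ 0 := abs_ne_zero.mpr (sub_ne_zero.mpr hne)
    rw [hr, Real.log_div two_ne_zero hab, Real.log_div hab two_ne_zero]
    ring
  rw [hL]
  -- witness points
  have himz : (0:ℝ) < 1 := one_pos
  set z₀ : UpperHalfPlane := ⟨⟨c, 1⟩, by norm_num [Complex.im]⟩ with hz₀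
  set w₀ : UpperHalfPlane := ⟨⟨c, r⟩, by simpa using hr0⟩ with hw₀
  have hz₀im : z₀.im = 1 := rfl
  have hw₀im : w₀.im = r := rfl
  have hre : z₀.re = w₀.re := rfl
  have hdist : dist z₀ w₀ = -Real.log r := by
    rw [UpperHalfPlane.dist_of_re_eq hre, hz₀im, hw₀im, Real.dist_eq, Real.log_one, zero_sub,
      abs_neg, abs_of_nonpos (Real.log_nonpos hr0.le hr1.le)]
  have hmem : -Real.log r ∈ {d : ℝ | ∃ z w : UpperHalfPlane, 1 ≤ z.im ∧
      ‖(w : ℂ) - (((α + α') / 2 : ℝ) : ℂ)‖ = |α - α'| / 2 ∧ d = dist z w} := by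
    refine ⟨z₀, w₀, le_refl 1, ?_, hdist.symm⟩
    have : ((w₀ : ℂ) - (c : ℂ)) = ⟨0, r⟩ := by
      apply Complex.ext <;> simp [hw₀, Complex.sub_re, Complex.sub_im, Complex.ofReal_re,
        Complex.ofReal_im]
    rw [this]
    simp only [Complex.norm_def, Complex.normSq_mk, mul_zero, zero_mul, zero_add, add_zero,
      mul_self_nonneg]
    rw [Real.sqrt_mul_self hr0.le]
  have hlb : ∀ d ∈ {d : ℝ | ∃ z w : UpperHalfPlane, 1 ≤ z.im ∧
      ‖(w : ℂ) - (((α + α') / 2 : ℝ) : ℂ)‖ = |α - α'| / 2 ∧ d = dist z w},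
      -Real.log r ≤ d := by
    rintro d ⟨z, w, hz, hw, rfl⟩
    have hwim : w.im ≤ r := by
      have := Complex.abs_im_le_norm ((w : ℂ) - (c : ℂ))
      rw [hw] at this
      have him : ((w : ℂ) - (c : ℂ)).im = w.im := by
        simp [Complex.sub_im, Complex.ofReal_im, UpperHalfPlane.coe_im]
      rw [him] at this
      calc w.im ≤ |w.im| := le_abs_self _
        _ ≤ |α - α'| / 2 := this
        _ = r := hr.symm
    have key : Real.log z.im - Real.log w.im ≤ dist z w := by
      calc Real.log z.im - Real.log w.im ≤ |Real.log z.im - Real.log w.im| := le_abs_self _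
        _ = dist (Real.log z.im) (Real.log w.im) := (Real.dist_eq _ _).symm
        _ ≤ dist z w := UpperHalfPlane.dist_log_im_le z w
    have h1 : 0 ≤ Real.log z.im := Real.log_nonneg hz
    have h2 : Real.log w.im ≤ Real.log r := Real.log_le_log w.im_pos hwim
    linarith
  have hbdd : BddBelow {d : ℝ | ∃ z w : UpperHalfPlane, 1 ≤ z.im ∧
      ‖(w : ℂ) - (((α + α') / 2 : ℝ) : ℂ)‖ = |α - α'| / 2 ∧ d = dist z w} :=
    ⟨-Real.log r, hlb⟩
  exact le_antisymm (csInf_le hbdd hmem) (le_csInf ⟨_, hmem⟩ hlb)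
end

section
/- Let ξ be an irrational real number with continued fraction expansion ξ = [a₀; a₁, a₂, …]. Then the sequence (a_n)_{n≥1} of partial quotients of ξ is bounded if and only if the image in the modular curve of the positive subray of the geodesic line from ∞ to ξ is bounded, i.e. if and only if sup_{0 < s ≤ 1} inf_{γ ∈ SL₂(ℤ)} d_ℍ(i, γ·(ξ + i s)) < +∞. -/
open scoped MatrixGroups

/-- The Gauss map iterates of `ξ`: `cfIter ξ 0 = ξ` and
`cfIter ξ (n+1) = 1/frac(cfIter ξ n)`, so that the continued fraction expansion
`ξ = [a₀; a₁, a₂, …]` has partial quotients `a_n = ⌊cfIter ξ n⌋`. -/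
noncomputable def cfIter (ξ : ℝ) : ℕ → ℝ
  | 0 => ξ
  | n + 1 => (Int.fract (cfIter ξ n))⁻¹

/-- The point `ξ + i·s` of the upper half-plane `ℍ`, for `s > 0`. -/
noncomputable def vertRayPt (ξ s : ℝ) (hs : 0 < s) : UpperHalfPlane :=
  ⟨(ξ : ℂ) + (s : ℂ) * Complex.I, by simpa using hs⟩

namespace CFAux

variable (ξ : ℝ)

lemma cfIter_irrational (hξ : Irrational ξ) : ∀ n, Irrational (cfIter ξ n)
  | 0 => hξ
  | n + 1 => by
    have h := cfIter_irrational hξ n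
    have h2 : Irrational (Int.fract (cfIter ξ n)) := by
      rw [← Int.self_sub_floor]
      exact Irrational.sub_intCast h ⌊cfIter ξ n⌋
    show Irrational (Int.fract (cfIter ξ n))⁻¹
    exact h2.inv

lemma one_lt_cfIter (hξ : Irrational ξ) (n : ℕ) : 1 < cfIter ξ (n + 1) := by
  have h := cfIter_irrational ξ hξ n
  have h0 : 0 < Int.fract (cfIter ξ n) := Int.fract_pos.mpr (h.ne_int _)
  have h1 : Int.fract (cfIter ξ n) < 1 := Int.fract_lt_one _
  show 1 < (Int.fract (cfIter ξ n))⁻¹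
  exact (one_lt_inv₀ h0).mpr h1

/-- partial quotients -/
noncomputable def A (n : ℕ) : ℤ := ⌊cfIter ξ n⌋

lemma one_le_A (hξ : Irrational ξ) (n : ℕ) : 1 ≤ A ξ (n + 1) :=
  Int.le_floor.mpr (by exact_mod_cast (one_lt_cfIter ξ hξ n).le)

lemma cfIter_eq (hξ : Irrational ξ) (n : ℕ) :
    cfIter ξ n = A ξ n + (cfIter ξ (n + 1))⁻¹ := by
  have h0 : Int.fract (cfIter ξ n) ≠ 0 :=
    ne_of_gt (Int.fract_pos.mpr ((cfIter_irrational ξ hξ n).ne_int _))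
  have h1 : (cfIter ξ (n+1))⁻¹ = Int.fract (cfIter ξ n) := by
    show ((Int.fract (cfIter ξ n))⁻¹)⁻¹ = _
    exact inv_inv _
  rw [h1, A, Int.fract]
  ring

end CFAux

namespace CFAux

noncomputable def num (ξ : ℝ) : ℕ → ℤ
  | 0 => 1
  | 1 => ⌊ξ⌋
  | n + 2 => A ξ (n + 1) * num ξ (n + 1) + num ξ n

noncomputable def den (ξ : ℝ) : ℕ → ℤ
  | 0 => 0
  | 1 => 1
  | n + 2 => A ξ (n + 1) * den ξ (n + 1) + den ξ n

variable (ξ : ℝ)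

lemma one_le_den (hξ : Irrational ξ) : ∀ n, 1 ≤ den ξ (n + 1)
  | 0 => le_refl 1
  | n + 1 => by
    have h1 := one_le_den hξ n
    have h2 := one_le_A ξ hξ n
    have h3 : (0:ℤ) ≤ den ξ n := by
      cases n with
      | zero => simp [den]
      | succ m => exact le_trans zero_le_one (one_le_den hξ m)
    show 1 ≤ A ξ (n + 1) * den ξ (n + 1) + den ξ n
    nlinarith

lemma den_nonneg (hξ : Irrational ξ) : ∀ n, 0 ≤ den ξ n
  | 0 => le_refl 0
  | n + 1 => le_trans zero_le_one (one_le_den ξ hξ n)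

lemma den_mono (hξ : Irrational ξ) : ∀ n, den ξ n ≤ den ξ (n + 1)
  | 0 => zero_le_one
  | n + 1 => by
    have h1 := one_le_den ξ hξ n
    have h2 := one_le_A ξ hξ n
    have h3 := den_nonneg ξ hξ n
    show den ξ (n+1) ≤ A ξ (n + 1) * den ξ (n + 1) + den ξ n
    nlinarith

lemma den_add (hξ : Irrational ξ) (n : ℕ) :
    den ξ (n+1) + den ξ n ≤ den ξ (n+2) := by
  have h2 := one_le_A ξ hξ n
  have h4 := one_le_den ξ hξ n
  show den ξ (n+1) + den ξ n ≤ A ξ (n + 1) * den ξ (n + 1) + den ξ n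
  nlinarith

lemma den_ge (hξ : Irrational ξ) : ∀ n : ℕ, (n : ℤ) ≤ den ξ (n + 1)
  | 0 => by simp [den]
  | n + 1 => by
    have key := den_add ξ hξ n
    have h1 := den_ge hξ n
    cases n with
    | zero =>
      have h6 : den ξ 1 + den ξ 0 = 1 := by simp [den]
      have key' : den ξ 1 + den ξ 0 ≤ den ξ 2 := key
      show (1:ℤ) ≤ den ξ 2
      omega
    | succ m =>
      have h5 := one_le_den ξ hξ m
      have key' : den ξ (m+2) + den ξ (m+1) ≤ den ξ (m+3) := key
      have h1' : (m:ℤ) + 1 ≤ den ξ (m + 2) := by push_cast at h1; linarith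
      show ((m:ℤ) + 1 + 1) ≤ den ξ (m+3)
      omega

lemma cf_main (hξ : Irrational ξ) : ∀ n,
    ξ * ((den ξ (n+1) : ℝ) * cfIter ξ (n+1) + (den ξ n : ℝ))
      = (num ξ (n+1) : ℝ) * cfIter ξ (n+1) + (num ξ n : ℝ)
  | 0 => by
    have h := cfIter_eq ξ hξ 0
    have hpos : 0 < cfIter ξ 1 := lt_trans one_pos (one_lt_cfIter ξ hξ 0)
    have hxy : ξ * cfIter ξ 1 = (A ξ 0 : ℝ) * cfIter ξ 1 + 1 := by
      have hx : cfIter ξ 0 = ξ := rfl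
      rw [hx] at h
      have hne : cfIter ξ 1 ≠ 0 := ne_of_gt hpos
      field_simp at h
      linarith [h]
    simp only [num, den]
    push_cast
    have hA : ((⌊ξ⌋ : ℤ) : ℝ) = (A ξ 0 : ℝ) := rfl
    rw [hA]
    linear_combination hxy
  | n + 1 => by
    have IH := cf_main hξ n
    have h := cfIter_eq ξ hξ (n+1)
    have hpos : 0 < cfIter ξ (n+2) := lt_trans one_pos (one_lt_cfIter ξ hξ (n+1))
    have hxy : cfIter ξ (n+1) * cfIter ξ (n+2) = (A ξ (n+1) : ℝ) * cfIter ξ (n+2) + 1 := by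
      rw [h]; field_simp
    show ξ * (((A ξ (n+1) * den ξ (n+1) + den ξ n : ℤ) : ℝ) * cfIter ξ (n+2) + (den ξ (n+1) : ℝ))
      = ((A ξ (n+1) * num ξ (n+1) + num ξ n : ℤ) : ℝ) * cfIter ξ (n+2) + (num ξ (n+1) : ℝ)
    push_cast
    linear_combination cfIter ξ (n+2) * IH -
      (ξ * (den ξ (n+1) : ℝ) - (num ξ (n+1) : ℝ)) * hxy

lemma cf_det : ∀ n, num ξ (n+1) * den ξ n - num ξ n * den ξ (n+1) = -(-1)^n
  | 0 => by simp [num, den]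
  | n + 1 => by
    have IH := cf_det n
    show (A ξ (n+1) * num ξ (n+1) + num ξ n) * den ξ (n+1)
        - num ξ (n+1) * (A ξ (n+1) * den ξ (n+1) + den ξ n) = -(-1)^(n+1)
    linear_combination (-1 : ℤ) * IH

lemma Q_pos (hξ : Irrational ξ) (n : ℕ) :
    0 < (den ξ (n+1) : ℝ) * cfIter ξ (n+1) + (den ξ n : ℝ) := by
  have h1 : (1:ℝ) ≤ (den ξ (n+1) : ℝ) := by exact_mod_cast one_le_den ξ hξ n
  have h2 : (0:ℝ) ≤ (den ξ n : ℝ) := by exact_mod_cast den_nonneg ξ hξ n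
  nlinarith [one_lt_cfIter ξ hξ n]

lemma cf_err (hξ : Irrational ξ) (n : ℕ) :
    ((den ξ (n+1) : ℝ) * ξ - (num ξ (n+1) : ℝ))
      * ((den ξ (n+1) : ℝ) * cfIter ξ (n+1) + (den ξ n : ℝ)) = (-1)^n := by
  have h := cf_main ξ hξ n
  have hd := cf_det ξ n
  have hd' : (num ξ (n+1) : ℝ) * (den ξ n : ℝ) - (num ξ n : ℝ) * (den ξ (n+1) : ℝ)
      = -(-1)^n := by exact_mod_cast congrArg (Int.cast : ℤ → ℝ) hd
  linear_combination (den ξ (n+1) : ℝ) * h - hd'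

end CFAux

namespace CFAux

variable (ξ : ℝ)

lemma err_prod_neg (hξ : Irrational ξ) (n : ℕ) :
    ((den ξ (n+1) : ℝ) * ξ - num ξ (n+1)) * ((den ξ (n+2) : ℝ) * ξ - num ξ (n+2)) < 0 := by
  have he1 := cf_err ξ hξ n
  have he2 := cf_err ξ hξ (n+1)
  have hQ1 := Q_pos ξ hξ n
  have hQ2 := Q_pos ξ hξ (n+1)
  have hmul : (((den ξ (n+1) : ℝ) * ξ - num ξ (n+1)) * ((den ξ (n+2) : ℝ) * ξ - num ξ (n+2)))
      * (((den ξ (n+1) : ℝ) * cfIter ξ (n+1) + den ξ n)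
        * ((den ξ (n+2) : ℝ) * cfIter ξ (n+2) + den ξ (n+1))) = -1 := by
    have : ((-1 : ℝ))^n * (-1)^(n+1) = -1 := by
      rw [← pow_add]
      exact Odd.neg_one_pow ⟨n, by ring⟩
    calc _ = (((den ξ (n+1) : ℝ) * ξ - num ξ (n+1)) * ((den ξ (n+1) : ℝ) * cfIter ξ (n+1) + den ξ n))
        * (((den ξ (n+2) : ℝ) * ξ - num ξ (n+2)) * ((den ξ (n+2) : ℝ) * cfIter ξ (n+2) + den ξ (n+1))) := by ring
    _ = (-1 : ℝ)^n * (-1)^(n+1) := by rw [he1, he2]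
    _ = -1 := this
  nlinarith [mul_pos hQ1 hQ2]

lemma err_ne_zero (hξ : Irrational ξ) (n : ℕ) :
    ((den ξ (n+1) : ℝ) * ξ - num ξ (n+1)) ≠ 0 := by
  intro h
  have := err_prod_neg ξ hξ n
  rw [h] at this
  simp at this

lemma best_approx (hξ : Irrational ξ) (n : ℕ) (c d : ℤ) (hc : 1 ≤ c)
    (hlt : c < den ξ (n+2)) :
    |(den ξ (n+1) : ℝ) * ξ - num ξ (n+1)| ≤ |(c:ℝ) * ξ - d| := by
  have hd2 := cf_det ξ (n+1)
  have hΔ : num ξ (n+1) * den ξ (n+2) - num ξ (n+2) * den ξ (n+1) = (-1)^(n+1) := by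
    linarith
  have hΔsq : (num ξ (n+1) * den ξ (n+2) - num ξ (n+2) * den ξ (n+1))
      * (num ξ (n+1) * den ξ (n+2) - num ξ (n+2) * den ξ (n+1)) = 1 := by
    rw [hΔ, ← pow_add]
    exact Even.neg_one_pow ⟨n+1, rfl⟩
  set x : ℤ := (num ξ (n+1) * den ξ (n+2) - num ξ (n+2) * den ξ (n+1))
      * (d * den ξ (n+2) - c * num ξ (n+2)) with hxdef
  set y : ℤ := (num ξ (n+1) * den ξ (n+2) - num ξ (n+2) * den ξ (n+1))
      * (c * num ξ (n+1) - d * den ξ (n+1)) with hydef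
  have hcx : x * den ξ (n+1) + y * den ξ (n+2) = c := by
    rw [hxdef, hydef]; linear_combination c * hΔsq
  have hdx : x * num ξ (n+1) + y * num ξ (n+2) = d := by
    rw [hxdef, hydef]; linear_combination d * hΔsq
  have hcx' : (x:ℝ) * den ξ (n+1) + (y:ℝ) * den ξ (n+2) = c := by exact_mod_cast hcx
  have hdx' : (x:ℝ) * num ξ (n+1) + (y:ℝ) * num ξ (n+2) = d := by exact_mod_cast hdx
  set e1 : ℝ := (den ξ (n+1) : ℝ) * ξ - num ξ (n+1) with he1def
  set e2 : ℝ := (den ξ (n+2) : ℝ) * ξ - num ξ (n+2) with he2def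
  have hreal : (c:ℝ) * ξ - d = (x:ℝ) * e1 + (y:ℝ) * e2 := by
    rw [he1def, he2def]
    linear_combination hdx' - ξ * hcx'
  have hD1 : (1:ℤ) ≤ den ξ (n+1) := one_le_den ξ hξ n
  have hD2 : (1:ℤ) ≤ den ξ (n+2) := one_le_den ξ hξ (n+1)
  rcases eq_or_ne y 0 with hy | hy
  · -- y = 0 : c = x * D1, x ≠ 0
    have hx0 : x ≠ 0 := by
      intro h
      rw [h, hy] at hcx
      simp at hcx
      omega
    have hxabs : (1:ℝ) ≤ |(x:ℝ)| := by
      have := Int.one_le_abs hx0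
      calc (1:ℝ) ≤ (|x| : ℤ) := by exact_mod_cast this
      _ = |(x:ℝ)| := by push_cast; ring
    rw [hreal, hy]
    push_cast
    rw [zero_mul, add_zero, abs_mul]
    nlinarith [abs_nonneg e1]
  · rcases eq_or_ne x 0 with hx | hx
    · -- x = 0 : c = y * D2, contradiction
      exfalso
      rw [hx] at hcx
      rw [zero_mul, zero_add] at hcx
      rcases lt_or_gt_of_ne hy with h | h
      · nlinarith
      · nlinarith
    · -- both nonzero
      have hxy : x * y < 0 := by
        rcases lt_or_gt_of_ne hx with h1 | h1 <;> rcases lt_or_gt_of_ne hy with h2 | h2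
        · exfalso; nlinarith
        · nlinarith
        · nlinarith
        · exfalso; nlinarith
      have hee := err_prod_neg ξ hξ n
      rw [← he1def, ← he2def] at hee
      have hxyR : (x:ℝ) * y < 0 := by exact_mod_cast hxy
      have hab : 0 < ((x:ℝ) * e1) * ((y:ℝ) * e2) := by nlinarith
      have hxabs : (1:ℝ) ≤ |(x:ℝ)| := by
        have := Int.one_le_abs hx
        calc (1:ℝ) ≤ (|x| : ℤ) := by exact_mod_cast this
        _ = |(x:ℝ)| := by push_cast; ring
      have key : |(x:ℝ) * e1| ≤ |(x:ℝ) * e1 + (y:ℝ) * e2| := by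
        rcases lt_or_ge 0 ((x:ℝ) * e1) with ha | ha
        · have hb : 0 < (y:ℝ) * e2 := by nlinarith
          rw [abs_of_pos ha, abs_of_pos (by linarith)]
          linarith
        · have ha' : (x:ℝ) * e1 < 0 := by
            rcases lt_or_eq_of_le ha with h | h
            · exact h
            · exfalso; rw [h] at hab; simp at hab
          have hb : (y:ℝ) * e2 < 0 := by nlinarith
          rw [abs_of_neg ha', abs_of_neg (by linarith)]
          linarith
      rw [hreal]
      calc |e1| ≤ |(x:ℝ)| * |e1| := by nlinarith [abs_nonneg e1]
      _ = |(x:ℝ) * e1| := (abs_mul _ _).symm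
      _ ≤ _ := key

end CFAux

namespace CFAux

variable (ξ : ℝ)

lemma err_abs (hξ : Irrational ξ) (n : ℕ) :
    |(den ξ (n+1) : ℝ) * ξ - num ξ (n+1)|
      * ((den ξ (n+1) : ℝ) * cfIter ξ (n+1) + den ξ n) = 1 := by
  have h := cf_err ξ hξ n
  have hQ := Q_pos ξ hξ n
  have := congrArg abs h
  rw [abs_mul, abs_of_pos hQ] at this
  rw [this]
  simp [abs_pow]

open Classical in
lemma badly_approx (hξ : Irrational ξ) (B : ℤ) (hB : ∀ n, A ξ (n+1) ≤ B)
    (c d : ℤ) (hc : 1 ≤ c) :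
    1 / (((B:ℝ) + 2) * c) ≤ |(c:ℝ) * ξ - d| := by
  have hB1 : 1 ≤ B := le_trans (one_le_A ξ hξ 0) (hB 0)
  set P : ℕ → Prop := fun n => den ξ (n+1) ≤ c with hP
  set n := Nat.findGreatest P c.toNat with hn
  have hP0 : P 0 := by show den ξ 1 ≤ c; show (1:ℤ) ≤ c; exact hc
  have hn1 : den ξ (n+1) ≤ c :=
    Nat.findGreatest_spec (Nat.zero_le _) hP0
  have hn2 : c < den ξ (n+2) := by
    by_contra h
    push_neg at h
    have hle : n + 1 ≤ c.toNat := by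
      have h1 : ((n:ℤ)+1) ≤ den ξ (n+2) := by
        have := den_ge ξ hξ (n+1); push_cast at this; linarith
      have h2 : ((n:ℤ)+1) ≤ c := le_trans h1 h
      omega
    exact Nat.findGreatest_is_greatest (Nat.lt_succ_self n) hle h
  have hba := best_approx ξ hξ n c d hc hn2
  have habs := err_abs ξ hξ n
  have hQ := Q_pos ξ hξ n
  -- bound Q ≤ (B+2) c
  have hx : cfIter ξ (n+1) < (A ξ (n+1) : ℝ) + 1 := Int.lt_floor_add_one _
  have hA : (A ξ (n+1) : ℝ) ≤ B := by exact_mod_cast hB n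
  have hD1 : (1:ℝ) ≤ (den ξ (n+1) : ℝ) := by exact_mod_cast one_le_den ξ hξ n
  have hD0 : (0:ℝ) ≤ (den ξ n : ℝ) := by exact_mod_cast den_nonneg ξ hξ n
  have hD01 : (den ξ n : ℝ) ≤ (den ξ (n+1) : ℝ) := by exact_mod_cast den_mono ξ hξ n
  have hD1c : (den ξ (n+1) : ℝ) ≤ c := by exact_mod_cast hn1
  have hQle : (den ξ (n+1) : ℝ) * cfIter ξ (n+1) + den ξ n ≤ ((B:ℝ) + 2) * c := by
    have h1 : (den ξ (n+1) : ℝ) * cfIter ξ (n+1) ≤ (den ξ (n+1) : ℝ) * ((B:ℝ) + 1) := by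
      apply mul_le_mul_of_nonneg_left _ (by linarith)
      linarith
    have hcR : (1:ℝ) ≤ (c:ℝ) := by exact_mod_cast hc
    nlinarith
  have hcpos : (0:ℝ) < ((B:ℝ) + 2) * c := by
    have hcR : (1:ℝ) ≤ (c:ℝ) := by exact_mod_cast hc
    have : (1:ℝ) ≤ (B:ℝ) := by exact_mod_cast hB1
    nlinarith
  have key : 1 / (((B:ℝ) + 2) * c) ≤ |(den ξ (n+1) : ℝ) * ξ - num ξ (n+1)| := by
    rw [div_le_iff₀ hcpos]
    calc 1 = |(den ξ (n+1) : ℝ) * ξ - num ξ (n+1)|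
        * ((den ξ (n+1) : ℝ) * cfIter ξ (n+1) + den ξ n) := habs.symm
    _ ≤ |(den ξ (n+1) : ℝ) * ξ - num ξ (n+1)| * (((B:ℝ) + 2) * c) := by
        apply mul_le_mul_of_nonneg_left hQle (abs_nonneg _)
  linarith

end CFAux

namespace CFAux

open UpperHalfPlane

noncomputable def mkSL (a b c d : ℤ) (h : a * d - b * c = 1) : SL(2,ℤ) :=
  ⟨!![a, b; c, d], by simp [Matrix.det_fin_two_of]; linarith⟩

lemma dist_SL2Z (g : SL(2,ℤ)) (x y : ℍ) : dist (g • x) (g • y) = dist x y := by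
  have h : ∀ w : ℍ, g • w = ((g : Matrix.SpecialLinearGroup (Fin 2) ℝ)) • w := fun w => rfl
  rw [h x, h y]
  exact dist_smul _ _ _

variable (ξ : ℝ)

lemma vertRayPt_im (s : ℝ) (hs : 0 < s) : (vertRayPt ξ s hs).im = s := by
  show ((ξ : ℂ) + (s : ℂ) * Complex.I).im = s
  simp

lemma vertRayPt_coe (s : ℝ) (hs : 0 < s) :
    ((vertRayPt ξ s hs : ℍ) : ℂ) = (ξ:ℂ) + (s:ℂ) * Complex.I := rfl

lemma normSq_denom_lower (hξ : Irrational ξ) (B : ℤ) (hB : ∀ n, A ξ (n+1) ≤ B)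
    (s : ℝ) (hs : 0 < s) (hs1 : s ≤ 1) (γ : SL(2,ℤ)) :
    min 1 (2 / ((B:ℝ) + 2)) * s ≤ Complex.normSq (denom γ (vertRayPt ξ s hs)) := by
  have hB1 : (1:ℝ) ≤ (B:ℝ) := by exact_mod_cast le_trans (one_le_A ξ hξ 0) (hB 0)
  set c : ℤ := γ 1 0 with hcdef
  set d : ℤ := γ 1 1 with hddef
  have hdenom : denom γ (vertRayPt ξ s hs) = ((c:ℝ)*ξ + d : ℝ) + (((c:ℝ)*s : ℝ) : ℂ) * Complex.I := by
    rw [ModularGroup.denom_apply, vertRayPt_coe]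
    push_cast
    ring
  have hnormSq : Complex.normSq (denom γ (vertRayPt ξ s hs))
      = ((c:ℝ)*ξ + d)^2 + ((c:ℝ)*s)^2 := by
    rw [hdenom]
    exact_mod_cast Complex.normSq_add_mul_I _ _
  rw [hnormSq]
  have hmin1 : min 1 (2 / ((B:ℝ) + 2)) ≤ 1 := min_le_left _ _
  have hmin2 : min 1 (2 / ((B:ℝ) + 2)) ≤ 2 / ((B:ℝ) + 2) := min_le_right _ _
  rcases eq_or_ne c 0 with hc | hc
  · -- c = 0, then d ≠ 0
    have hd : d ≠ 0 := by
      intro hd0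
      have := denom_ne_zero γ (vertRayPt ξ s hs)
      rw [hdenom, hc, hd0] at this
      simp at this
    have : (1:ℝ) ≤ ((d:ℝ))^2 := by
      have h1 : (1:ℤ) ≤ d^2 := by nlinarith [sq_nonneg d, Int.one_le_abs hd, sq_abs d]
      exact_mod_cast h1
    rw [hc]
    push_cast
    nlinarith
  · -- c ≠ 0
    have hkey : 1 / ((B:ℝ) + 2) ≤ |(c:ℝ)| * |(c:ℝ)*ξ + d| := by
      rcases lt_or_gt_of_ne hc with hneg | hpos
      · have h1 := badly_approx ξ hξ B hB (-c) d (by omega)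
        have habs : |((-c : ℤ):ℝ) * ξ - d| = |(c:ℝ)*ξ + d| := by
          push_cast
          rw [← abs_neg]
          ring_nf
        rw [habs] at h1
        have hcR : (1:ℝ) ≤ ((-c:ℤ):ℝ) := by exact_mod_cast (by omega : (1:ℤ) ≤ -c)
        have hcne : ((-c:ℤ):ℝ) ≠ 0 := by linarith
        have hcabs : |(c:ℝ)| = ((-c : ℤ):ℝ) := by
          push_cast
          rw [abs_of_neg (by exact_mod_cast hneg)]
        rw [hcabs]
        calc 1 / ((B:ℝ) + 2) = ((-c:ℤ):ℝ) * (1 / (((B:ℝ)+2) * ((-c:ℤ):ℝ))) := by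
              field_simp
        _ ≤ ((-c:ℤ):ℝ) * |(c:ℝ)*ξ + d| :=
              mul_le_mul_of_nonneg_left h1 (by linarith)
      · have h1 := badly_approx ξ hξ B hB c (-d) (by omega)
        have habs : |(c:ℝ) * ξ - ((-d : ℤ):ℝ)| = |(c:ℝ)*ξ + d| := by
          push_cast
          ring_nf
        rw [habs] at h1
        have hcR : (1:ℝ) ≤ ((c:ℤ):ℝ) := by exact_mod_cast (by omega : (1:ℤ) ≤ c)
        have hcne : ((c:ℤ):ℝ) ≠ 0 := by linarith
        have hcabs : |(c:ℝ)| = ((c:ℤ):ℝ) := abs_of_pos (by exact_mod_cast hpos)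
        rw [hcabs]
        calc 1 / ((B:ℝ) + 2) = ((c:ℤ):ℝ) * (1 / (((B:ℝ)+2) * ((c:ℤ):ℝ))) := by
              field_simp
        _ ≤ ((c:ℤ):ℝ) * |(c:ℝ)*ξ + d| :=
              mul_le_mul_of_nonneg_left h1 (by linarith)
    -- (cξ+d)² + (cs)² ≥ 2|cξ+d||c|s ≥ 2κs
    have h2 : ((c:ℝ)*ξ + d)^2 + ((c:ℝ)*s)^2 ≥ 2 * (|(c:ℝ)| * |(c:ℝ)*ξ + d|) * s := by
      have hsq1 : ((c:ℝ)*ξ + d)^2 = |(c:ℝ)*ξ + d|^2 := (sq_abs _).symm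
      have hsq2 : ((c:ℝ)*s)^2 = (|(c:ℝ)| * s)^2 := by
        rw [mul_pow, mul_pow, sq_abs]
      rw [hsq1, hsq2]
      nlinarith [sq_nonneg (|(c:ℝ)*ξ + d| - |(c:ℝ)| * s)]
    have h3 : 2 * (|(c:ℝ)| * |(c:ℝ)*ξ + d|) * s ≥ 2 / ((B:ℝ) + 2) * s := by
      have := hkey
      have h4 : 2 * (1 / ((B:ℝ)+2)) ≤ 2 * (|(c:ℝ)| * |(c:ℝ)*ξ + d|) := by linarith
      have h5 : 2 * (1 / ((B:ℝ)+2)) = 2 / ((B:ℝ)+2) := by ring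
      nlinarith
    nlinarith

end CFAux

namespace CFAux

open UpperHalfPlane

variable (ξ : ℝ)

lemma dirA (hξ : Irrational ξ) (B : ℝ) (hB : ∀ n : ℕ, 1 ≤ n → (⌊cfIter ξ n⌋ : ℝ) ≤ B) :
    ∃ M : ℝ, ∀ (s : ℝ) (hs : 0 < s), s ≤ 1 →
      ∃ γ : SL(2, ℤ), dist UpperHalfPlane.I (γ • vertRayPt ξ s hs) ≤ M := by
  set Bz : ℤ := max 1 ⌈B⌉ with hBzdef
  have hBz : ∀ n, A ξ (n+1) ≤ Bz := by
    intro n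
    have h1 := hB (n+1) (by omega)
    have h2 : (A ξ (n+1) : ℝ) ≤ B := h1
    have h3 : A ξ (n+1) ≤ ⌈B⌉ := by
      have := Int.le_ceil B
      exact_mod_cast le_trans h2 this
    exact le_trans h3 (le_max_right _ _)
  set δ : ℝ := min 1 (2 / ((Bz:ℝ) + 2)) with hδdef
  have hB1 : (1:ℝ) ≤ (Bz:ℝ) := by exact_mod_cast le_max_left 1 ⌈B⌉
  have hδpos : 0 < δ := by
    apply lt_min one_pos
    positivity
  have hδ1 : δ ≤ 1 := min_le_left _ _
  refine ⟨2 * Real.arsinh (3/2 + 1/δ), fun s hs hs1 => ?_⟩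
  obtain ⟨γ, hγfd⟩ := ModularGroup.exists_smul_mem_fd (vertRayPt ξ s hs)
  refine ⟨γ, ?_⟩
  set w : ℍ := γ • vertRayPt ξ s hs with hwdef
  have hnorm := normSq_denom_lower ξ hξ Bz hBz s hs hs1 γ
  have hwim_le : w.im ≤ 1/δ := by
    rw [hwdef, ModularGroup.im_smul_eq_div_normSq, vertRayPt_im]
    rw [div_le_div_iff₀ (normSq_denom_pos γ (vertRayPt ξ s hs).im_ne_zero) hδpos]
    calc s * δ = δ * s := by ring
    _ ≤ Complex.normSq (denom γ (vertRayPt ξ s hs)) := hnorm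
    _ = 1 * Complex.normSq (denom γ (vertRayPt ξ s hs)) := (one_mul _).symm
  have hw1 : 1 ≤ Complex.normSq (w : ℂ) := hγfd.1
  have hw2 : |w.re| ≤ 1/2 := hγfd.2
  have hwim_pos : 0 < w.im := w.im_pos
  have hwim_ge : 1/2 ≤ w.im := by
    have : Complex.normSq (w : ℂ) = w.re^2 + w.im^2 := by
      rw [Complex.normSq_apply]; rw [← UpperHalfPlane.coe_re w, ← UpperHalfPlane.coe_im w]; ring
    nlinarith [abs_nonneg w.re, sq_abs w.re]
  rw [UpperHalfPlane.dist_eq]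
  have hratio : dist (UpperHalfPlane.I : ℂ) (w : ℂ)
      / (2 * Real.sqrt (UpperHalfPlane.I.im * w.im)) ≤ 3/2 + 1/δ := by
    have hIim : (UpperHalfPlane.I : ℍ).im = 1 := rfl
    have hIcoe : ((UpperHalfPlane.I : ℍ) : ℂ) = Complex.I := rfl
    have hnum : dist (UpperHalfPlane.I : ℂ) (w : ℂ) ≤ 3/2 + 1/δ := by
      rw [Complex.dist_eq, hIcoe]
      have h1 : ‖Complex.I - w‖ ≤ |(Complex.I - (w:ℂ)).re| + |(Complex.I - (w:ℂ)).im| :=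
        Complex.norm_le_abs_re_add_abs_im _
      have h2 : (Complex.I - (w:ℂ)).re = -w.re := by simp
      have h3 : (Complex.I - (w:ℂ)).im = 1 - w.im := by simp
      rw [h2, h3] at h1
      have hδinv : 1 ≤ 1/δ := by
        rw [le_div_iff₀ hδpos]; linarith
      have h4 : |1 - w.im| ≤ 1/δ := by
        rw [abs_le]
        constructor <;> nlinarith
      have h5 : |-w.re| ≤ 1/2 := by rw [abs_neg]; exact hw2
      linarith
    have hden : 1 ≤ 2 * Real.sqrt (UpperHalfPlane.I.im * w.im) := by
      rw [hIim, one_mul]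
      have : (1/2 : ℝ) ≤ Real.sqrt w.im := by
        have h8 : Real.sqrt (1/4 : ℝ) ≤ Real.sqrt w.im := Real.sqrt_le_sqrt (by linarith)
        have h9 : Real.sqrt (1/4 : ℝ) = 1/2 := by
          rw [show (1/4:ℝ) = (1/2)^2 by norm_num, Real.sqrt_sq (by norm_num)]
        linarith
      linarith
    have hnn : 0 ≤ dist (UpperHalfPlane.I : ℂ) (w : ℂ) := dist_nonneg
    calc dist (UpperHalfPlane.I : ℂ) (w : ℂ) / (2 * Real.sqrt (UpperHalfPlane.I.im * w.im))
        ≤ dist (UpperHalfPlane.I : ℂ) (w : ℂ) / 1 := by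
          apply div_le_div_of_nonneg_left hnn one_pos hden |>.trans_eq rfl
    _ = dist (UpperHalfPlane.I : ℂ) (w : ℂ) := div_one _
    _ ≤ 3/2 + 1/δ := hnum
  have := Real.arsinh_le_arsinh.mpr hratio
  linarith

end CFAux

namespace CFAux

open UpperHalfPlane

lemma mkSL_denom (a b c d : ℤ) (h : a * d - b * c = 1) (z : ℍ) :
    denom (mkSL a b c d h) z = (c : ℂ) * z + d := by
  rw [ModularGroup.denom_apply]
  simp [mkSL]

variable (ξ : ℝ)

set_option maxHeartbeats 1000000 in
lemma dirB (hξ : Irrational ξ) (M : ℝ)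
    (hM : ∀ (s : ℝ) (hs : 0 < s), s ≤ 1 →
      ∃ γ : SL(2, ℤ), dist UpperHalfPlane.I (γ • vertRayPt ξ s hs) ≤ M)
    (n : ℕ) (hn : 1 ≤ n) : (⌊cfIter ξ n⌋ : ℝ) ≤ 2 * Real.exp M := by
  obtain ⟨m, rfl⟩ : ∃ m, n = m + 1 := ⟨n - 1, by omega⟩
  have hD1 : (1:ℝ) ≤ (den ξ (m+1) : ℝ) := by exact_mod_cast one_le_den ξ hξ m
  have hD1pos : (0:ℝ) < (den ξ (m+1) : ℝ) := by linarith
  have hD0 : (0:ℝ) ≤ (den ξ m : ℝ) := by exact_mod_cast den_nonneg ξ hξ m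
  set e : ℝ := (den ξ (m+1) : ℝ) * ξ - num ξ (m+1) with hedef
  have habs : |e| * ((den ξ (m+1) : ℝ) * cfIter ξ (m+1) + den ξ m) = 1 := err_abs ξ hξ m
  have hQpos := Q_pos ξ hξ m
  have hx1 : 1 < cfIter ξ (m+1) := one_lt_cfIter ξ hξ m
  have hQ1 : 1 < (den ξ (m+1) : ℝ) * cfIter ξ (m+1) + den ξ m := by nlinarith
  have hβpos : 0 < |e| := by nlinarith
  have hβlt1 : |e| < 1 := by nlinarith
  set s : ℝ := |e| / (den ξ (m+1) : ℝ) with hsdef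
  have hs : 0 < s := div_pos hβpos hD1pos
  have hs1 : s ≤ 1 := by
    rw [hsdef, div_le_one hD1pos]; linarith
  have hdet := cf_det ξ m
  have hsq : ((-1:ℤ)^m) * ((-1:ℤ)^m) = 1 := by
    rw [← pow_add]; exact Even.neg_one_pow ⟨m, rfl⟩
  have hdet1 : ((-1:ℤ)^m * den ξ m) * (-(num ξ (m+1))) - (-((-1:ℤ)^m) * num ξ m) * den ξ (m+1) = 1 := by
    linear_combination (-(-1:ℤ)^m) * hdet + hsq
  set γ₀ : SL(2,ℤ) := mkSL ((-1)^m * den ξ m) (-((-1)^m) * num ξ m)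
      (den ξ (m+1)) (-(num ξ (m+1))) hdet1 with hγ₀def
  set z : ℍ := vertRayPt ξ s hs with hzdef
  have hdenom : denom γ₀ z = ((e : ℝ) : ℂ) + (((den ξ (m+1) : ℝ) * s : ℝ) : ℂ) * Complex.I := by
    rw [hγ₀def, mkSL_denom, hzdef, vertRayPt_coe, hedef]
    push_cast
    ring
  have hD1s : (den ξ (m+1) : ℝ) * s = |e| := by
    rw [hsdef]; field_simp
  have hnormSq : Complex.normSq (denom γ₀ z) = 2 * e^2 := by
    rw [hdenom]
    have := Complex.normSq_add_mul_I e ((den ξ (m+1) : ℝ) * s)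
    rw [this, hD1s, sq_abs]
    ring
  have him0 : (γ₀ • z).im = s / (2 * e^2) := by
    rw [ModularGroup.im_smul_eq_div_normSq, hnormSq, hzdef, vertRayPt_im]
  have hA1 : (1:ℝ) ≤ (A ξ (m+1) : ℝ) := by exact_mod_cast one_le_A ξ hξ m
  have hxA : (A ξ (m+1) : ℝ) ≤ cfIter ξ (m+1) := Int.floor_le _
  have hADQ : (A ξ (m+1) : ℝ) * (den ξ (m+1) : ℝ)
      ≤ (den ξ (m+1) : ℝ) * cfIter ξ (m+1) + den ξ m := by nlinarith
  have him : (A ξ (m+1) : ℝ) / 2 ≤ (γ₀ • z).im := by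
    rw [him0]
    have h2e : (0:ℝ) < 2 * e^2 := by nlinarith [sq_abs e]
    rw [div_le_div_iff₀ (by norm_num) h2e]
    -- A * (2 e²) ≤ s * 2
    have he2 : e^2 = |e| * |e| := by rw [← sq_abs]; ring
    have key : (A ξ (m+1) : ℝ) * (den ξ (m+1) : ℝ) * (|e| * |e|) ≤ |e| := by
      calc (A ξ (m+1) : ℝ) * (den ξ (m+1) : ℝ) * (|e| * |e|)
          ≤ ((den ξ (m+1) : ℝ) * cfIter ξ (m+1) + den ξ m) * (|e| * |e|) := by
            apply mul_le_mul_of_nonneg_right hADQ (by positivity)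
      _ = (|e| * ((den ξ (m+1) : ℝ) * cfIter ξ (m+1) + den ξ m)) * |e| := by ring
      _ = |e| := by rw [habs]; ring
    have key2 : (A ξ (m+1) : ℝ) * (|e| * |e|) * (den ξ (m+1) : ℝ) ≤ s * (den ξ (m+1) : ℝ) := by
      have hseq : s * (den ξ (m+1) : ℝ) = |e| := by rw [hsdef]; field_simp
      rw [hseq]
      calc (A ξ (m+1) : ℝ) * (|e| * |e|) * (den ξ (m+1) : ℝ)
          = (A ξ (m+1) : ℝ) * (den ξ (m+1) : ℝ) * (|e| * |e|) := by ring
      _ ≤ |e| := key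
    have key3 : (A ξ (m+1) : ℝ) * (|e| * |e|) ≤ s :=
      le_of_mul_le_mul_right (by linarith [key2]) hD1pos
    rw [he2]
    linarith
  obtain ⟨γ, hγ⟩ := hM s hs hs1
  set g : SL(2,ℤ) := γ₀ * γ⁻¹ with hgdef
  have hsmul : γ₀ • z = g • (γ • z) := by
    rw [hgdef, smul_smul, inv_mul_cancel_right]
  have hgI : (g • UpperHalfPlane.I).im ≤ 1 := by
    rw [ModularGroup.im_smul_eq_div_normSq]
    have hIim : (UpperHalfPlane.I : ℍ).im = 1 := rfl
    rw [hIim]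
    have hdenomI : denom g UpperHalfPlane.I
        = ((g 1 1 : ℝ) : ℂ) + ((g 1 0 : ℝ) : ℂ) * Complex.I := by
      rw [ModularGroup.denom_apply]
      have : ((UpperHalfPlane.I : ℍ) : ℂ) = Complex.I := rfl
      rw [this]
      push_cast
      ring
    have hns : Complex.normSq (denom g UpperHalfPlane.I)
        = ((g 1 1 : ℤ):ℝ)^2 + ((g 1 0 : ℤ):ℝ)^2 := by
      rw [hdenomI]
      exact Complex.normSq_add_mul_I _ _
    have hne : ¬(g 1 0 = 0 ∧ g 1 1 = 0) := by
      rintro ⟨h1, h2⟩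
      have := denom_ne_zero g UpperHalfPlane.I
      rw [hdenomI, h1, h2] at this
      simp at this
    have hge1 : (1:ℝ) ≤ ((g 1 1 : ℤ):ℝ)^2 + ((g 1 0 : ℤ):ℝ)^2 := by
      have hz : (1:ℤ) ≤ (g 1 1)^2 + (g 1 0)^2 := by
        rcases Classical.em (g 1 0 = 0) with h | h
        · have h2 : g 1 1 ≠ 0 := fun h2 => hne ⟨h, h2⟩
          nlinarith [sq_nonneg (g 1 0), Int.one_le_abs h2, sq_abs (g 1 1)]
        · nlinarith [sq_nonneg (g 1 1), Int.one_le_abs h, sq_abs (g 1 0)]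
      exact_mod_cast hz
    rw [hns]
    rw [div_le_one (by linarith)]
    linarith
  have hdist : dist (g • UpperHalfPlane.I) (γ₀ • z) ≤ M := by
    rw [hsmul, dist_SL2Z g UpperHalfPlane.I (γ • z)]
    exact hγ
  have hfin : (γ₀ • z).im ≤ Real.exp M := by
    calc (γ₀ • z).im ≤ (g • UpperHalfPlane.I).im * Real.exp (dist (γ₀ • z) (g • UpperHalfPlane.I)) :=
        im_le_im_mul_exp_dist _ _
    _ ≤ 1 * Real.exp M := by
        apply mul_le_mul hgI _ (Real.exp_nonneg _) zero_le_one
        rw [Real.exp_le_exp]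
        rw [dist_comm]
        exact hdist
    _ = Real.exp M := one_mul _
  have : (A ξ (m+1) : ℝ) ≤ 2 * Real.exp M := by linarith
  exact this

end CFAux


/-- For an irrational real number `ξ`, the sequence `(a_n)_{n ≥ 1}` of partial
quotients of the continued fraction expansion of `ξ` is bounded if and only if the
image in the modular curve of the positive subray of the geodesic line in `ℍ` from `∞`
to `ξ` is bounded, i.e. iff `sup_{0 < s ≤ 1} inf_{γ ∈ SL₂(ℤ)} d_ℍ(i, γ·(ξ + i s))` is
finite. -/
theorem bounded_partial_quotients_iff_bounded_geodesic_ray (ξ : ℝ) (hξ : Irrational ξ) :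
    (∃ B : ℝ, ∀ n : ℕ, 1 ≤ n → (⌊cfIter ξ n⌋ : ℝ) ≤ B) ↔
    (∃ M : ℝ, ∀ (s : ℝ) (hs : 0 < s), s ≤ 1 →
      ∃ γ : SL(2, ℤ), dist UpperHalfPlane.I (γ • vertRayPt ξ s hs) ≤ M) := by
  constructor
  · rintro ⟨B, hB⟩
    exact CFAux.dirA ξ hξ B hB
  · rintro ⟨M, hM⟩
    exact ⟨2 * Real.exp M, fun n hn => CFAux.dirB ξ hξ M hM n hn⟩
end
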